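/- Let π₁: X₁ → B₁ be a map of metric spaces, Y a geodesic metric space, and suppose we have maps f: X₁ → X, f^Y: Y → X, π₂: Y → B₁ with f' : Y → X₁ satisfying f ∘ f' = f^Y and π₁ ∘ f' = π₂. Assume: (1) f, f^Y, π₂ are coarsely L-Lipschitz; (2) for all b, b' ∈ B₁ and N ≥ 0, d_{B₁}(b,b') ≤ N implies the Hausdorff distance between π₁⁻¹(b) and π₁⁻¹(b') is at most φ₁(N); (3) the restrictions of f to the fibers of π₁ are uniformly properly embedded as measured by φ₂. Then there is a function φ depending only on L, φ₁, φ₂ such that d_Y(y, y') ≤ R implies d_{X₁}(f'(y), f'(y')) ≤ φ(R); in particular f' is coarsely φ(1)-Lipschitz. -/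
import Mathlib


open Set

/-- A map is coarsely `L`-Lipschitz. -/
def CoarselyLipschitzWith {α β : Type*} [PseudoMetricSpace α] [PseudoMetricSpace β]
    (L : ℝ) (g : α → β) : Prop :=
  ∀ x y : α, dist (g x) (g y) ≤ L * dist x y + L

/-- A metric space is geodesic. -/
def IsGeodesicSpace (Z : Type*) [MetricSpace Z] : Prop :=
  ∀ x y : Z, ∃ γ : ℝ → Z, γ 0 = x ∧ γ (dist x y) = y ∧
    ∀ s ∈ Icc (0 : ℝ) (dist x y), ∀ t ∈ Icc (0 : ℝ) (dist x y),
      dist (γ s) (γ t) = |s - t|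

/-- **Pullback maps are coarsely Lipschitz.**
Given `L ≥ 0` and `φ₁, φ₂`, there is `φ` such that the following holds.  Suppose
`π₁ : X₁ → B₁`, and maps `f : X₁ → X`, `f^Y : Y → X`, `π₂ : Y → B₁`,
`f' : Y → X₁` satisfy `f ∘ f' = f^Y` and `π₁ ∘ f' = π₂`, where (1) `f, f^Y, π₂` are
coarsely `L`-Lipschitz, (2) fibers of `π₁` over points at distance `≤ N` in `B₁` are
at Hausdorff distance `≤ φ₁ N`, and (3) the restrictions of `f` to the fibers of
`π₁` are uniformly properly embedded as measured by `φ₂`.  Then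
`d_Y(y,y') ≤ R` implies `d_{X₁}(f' y, f' y') ≤ φ R`; in particular `f'` is coarsely
`φ 1`-Lipschitz. -/
theorem pullback_map_coarsely_lipschitz (L : ℝ) (φ₁ φ₂ : ℝ → ℝ) :
    ∃ φ : ℝ → ℝ,
      ∀ (X₁ X B₁ Y : Type*) [MetricSpace X₁] [MetricSpace X] [MetricSpace B₁]
        [MetricSpace Y],
        IsGeodesicSpace Y →
        ∀ (π₁ : X₁ → B₁) (f : X₁ → X) (fY : Y → X) (π₂ : Y → B₁) (f' : Y → X₁),
        (∀ y : Y, f (f' y) = fY y) → (∀ y : Y, π₁ (f' y) = π₂ y) →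
        CoarselyLipschitzWith L f → CoarselyLipschitzWith L fY →
        CoarselyLipschitzWith L π₂ →
        (∀ (b b' : B₁) (N : ℝ), 0 ≤ N → dist b b' ≤ N →
          ∀ x : X₁, π₁ x = b → ∃ x' : X₁, π₁ x' = b' ∧ dist x x' ≤ φ₁ N) →
        (∀ (b : B₁) (x x' : X₁), π₁ x = b → π₁ x' = b → ∀ N : ℝ, 0 ≤ N →
          dist (f x) (f x') ≤ N → dist x x' ≤ φ₂ N) →
        ∀ (y y' : Y) (R : ℝ), 0 ≤ R → dist y y' ≤ R →
          dist (f' y) (f' y') ≤ φ R := by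
  refine ⟨fun R => max 0 (φ₁ (L * R + L)) +
      φ₂ (L * max 0 (φ₁ (L * R + L)) + L * R + 2 * L), ?_⟩
  intro X₁ X B₁ Y _ _ _ _ _hgeo π₁ f fY π₂ f' hff' hπf' hf hfY hπ₂ hHaus hprop y y' R hR hyy'
  have hL : 0 ≤ L := by simpa using hπ₂ y y
  set M : ℝ := max 0 (φ₁ (L * R + L)) with hM
  have hM0 : 0 ≤ M := le_max_left _ _
  have hN1 : 0 ≤ L * R + L := add_nonneg (mul_nonneg hL hR) hL
  have h1 : dist (π₁ (f' y)) (π₁ (f' y')) ≤ L * R + L := by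
    rw [hπf', hπf']
    calc dist (π₂ y) (π₂ y') ≤ L * dist y y' + L := hπ₂ y y'
      _ ≤ L * R + L := by nlinarith [mul_le_mul_of_nonneg_left hyy' hL]
  obtain ⟨x', hx'π, hx'd⟩ :=
    hHaus (π₁ (f' y)) (π₁ (f' y')) (L * R + L) hN1 h1 (f' y) rfl
  have hdx' : dist (f' y) x' ≤ M := hx'd.trans (le_max_right _ _)
  have h2 : dist (f x') (f (f' y')) ≤ L * M + L * R + 2 * L := by
    have t1 : dist (f x') (f (f' y)) ≤ L * M + L := by
      calc dist (f x') (f (f' y)) ≤ L * dist x' (f' y) + L := hf x' (f' y)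
        _ ≤ L * M + L := by
            have hdx2 : dist x' (f' y) ≤ M := by rw [dist_comm]; exact hdx'
            nlinarith [mul_le_mul_of_nonneg_left hdx2 hL]
    have t2 : dist (f (f' y)) (f (f' y')) ≤ L * R + L := by
      rw [hff', hff']
      calc dist (fY y) (fY y') ≤ L * dist y y' + L := hfY y y'
        _ ≤ L * R + L := by nlinarith [mul_le_mul_of_nonneg_left hyy' hL]
    calc dist (f x') (f (f' y')) ≤ dist (f x') (f (f' y)) + dist (f (f' y)) (f (f' y')) :=
          dist_triangle _ _ _
      _ ≤ L * M + L * R + 2 * L := by linarith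
  have hN2 : 0 ≤ L * M + L * R + 2 * L := by
    have := mul_nonneg hL hM0
    have := mul_nonneg hL hR
    linarith
  have h3 : dist x' (f' y') ≤ φ₂ (L * M + L * R + 2 * L) :=
    hprop (π₂ y') x' (f' y') (by rw [hx'π, hπf']) (hπf' y') _ hN2 h2
  calc dist (f' y) (f' y') ≤ dist (f' y) x' + dist x' (f' y') := dist_triangle _ _ _
    _ ≤ M + φ₂ (L * M + L * R + 2 * L) := add_le_add hdx' h3
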